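/- There is no tiling of a 6×n rectangle by T tetrominoes for any positive integer n. -/

import Mathlib

/-- Translate a set of cells by a vector. -/
def translateBy (v : ℤ × ℤ) (s : Finset (ℤ × ℤ)) : Finset (ℤ × ℤ) :=
  s.image (fun p => (p.1 + v.1, p.2 + v.2))

/-- The cells of a `w × h` rectangle: `[0,w) × [0,h) ∩ ℤ²`
(first coordinate is horizontal). -/
noncomputable def Rect (w h : ℕ) : Finset (ℤ × ℤ) :=
  Finset.Ico (0 : ℤ) (w : ℤ) ×ˢ Finset.Ico (0 : ℤ) (h : ℤ)

/-- Rotation by 90 degrees. -/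
def rot90 (p : ℤ × ℤ) : ℤ × ℤ := (-p.2, p.1)

/-- The four rotations of a base shape. -/
def rotationsOf (base : Finset (ℤ × ℤ)) : Finset (Finset (ℤ × ℤ)) :=
  {base, base.image rot90, (base.image rot90).image rot90,
   ((base.image rot90).image rot90).image rot90}

/-- `T` is a tiling of the region `R` by translated copies of the given shapes:
its members are placed tiles, pairwise disjoint, whose union is `R`. -/
def IsTiling (shapes : Finset (Finset (ℤ × ℤ))) (R : Finset (ℤ × ℤ))
    (T : Finset (Finset (ℤ × ℤ))) : Prop :=
  (∀ P ∈ T, ∃ s ∈ shapes, ∃ v : ℤ × ℤ, P = translateBy v s) ∧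
  (∀ P ∈ T, ∀ Q ∈ T, P ≠ Q → Disjoint P Q) ∧
  T.biUnion id = R

/-- The T tetromino and its rotations. -/
def Tshapes : Finset (Finset (ℤ × ℤ)) :=
  rotationsOf {((0, 0) : ℤ × ℤ), (1, 0), (2, 0), (1, 1)}

def Anchored : Finset (Finset (ℤ × ℤ)) :=
  Tshapes.biUnion (fun s => s.image (fun p => translateBy (-p.1, -p.2) s))

lemma trTranslate (u v : ℤ × ℤ) (s : Finset (ℤ × ℤ)) :
    translateBy v (translateBy u s) = translateBy (u.1 + v.1, u.2 + v.2) s := by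
  unfold translateBy
  rw [Finset.image_image]
  congr 1
  funext p
  simp [Function.comp]
  constructor <;> ring

lemma classify {s : Finset (ℤ × ℤ)} {v c : ℤ × ℤ} (hs : s ∈ Tshapes)
    (hc : c ∈ translateBy v s) :
    ∃ t ∈ Anchored, translateBy v s = translateBy c t := by
  rw [translateBy, Finset.mem_image] at hc
  obtain ⟨p, hp, hpc⟩ := hc
  refine ⟨translateBy (-p.1, -p.2) s,
    Finset.mem_biUnion.2 ⟨s, hs, Finset.mem_image_of_mem _ hp⟩, ?_⟩
  rw [trTranslate]
  have hv : (-p.1 + c.1, -p.2 + c.2) = v := by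
    rw [← hpc]; simp
  rw [hv]

lemma notinR {n : ℕ} {P : Finset (ℤ × ℤ)} (hsub : P ⊆ Rect n 6) (c : ℤ × ℤ)
    (hc : c ∈ P) (h : c.1 < 0 ∨ c.2 < 0 ∨ 6 ≤ c.2) : False := by
  have := hsub hc
  simp [Rect] at this
  omega

lemma inR_bound {n : ℕ} {P : Finset (ℤ × ℤ)} (hsub : P ⊆ Rect n 6) (c : ℤ × ℤ)
    (hc : c ∈ P) : c.1 < (n : ℤ) := by
  have := hsub hc
  simp [Rect] at this
  omega

lemma clash {T : Finset (Finset (ℤ × ℤ))}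
    (hdisj : ∀ P ∈ T, ∀ Q ∈ T, P ≠ Q → Disjoint P Q) {P Q : Finset (ℤ × ℤ)}
    (hP : P ∈ T) (hQ : Q ∈ T) (hne : P ≠ Q) (hint : P ∩ Q ≠ ∅) : False :=
  hint (Finset.disjoint_iff_inter_eq_empty.1 (hdisj P hP Q hQ hne))

/-- no tiling of a 6×n rectangle by T tetrominoes. -/
theorem t_tetromino_6xn_no_tiling (n : ℕ) (hn : 0 < n) :
    ¬ ∃ T, IsTiling Tshapes (Rect n 6) T := by
  rintro ⟨T, hsh, hdisj, hcov⟩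
  have subR : ∀ P ∈ T, P ⊆ Rect n 6 := by
    intro P hP x hx
    rw [← hcov]
    exact Finset.mem_biUnion.2 ⟨P, hP, hx⟩
  have cover : ∀ c ∈ Rect n 6, ∃ P ∈ T, c ∈ P := by
    intro c hc
    rw [← hcov] at hc
    simpa using Finset.mem_biUnion.1 hc
  obtain ⟨P0, hPT0, hPc0⟩ := cover ((0 : ℤ), (0 : ℤ)) (by simp [Rect]; omega)
  obtain ⟨s0, hs0, v0, rfl⟩ := hsh P0 hPT0
  obtain ⟨t0, ht0, hPe0⟩ := classify hs0 hPc0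
  rw [hPe0] at hPT0
  clear hPc0 hPe0 hs0
  fin_cases ht0 <;>
    first
    | (exact notinR (subR _ hPT0) ((-1 : ℤ), (0 : ℤ)) (by decide) (by decide))
    | (exact notinR (subR _ hPT0) ((-2 : ℤ), (0 : ℤ)) (by decide) (by decide))
    | (exact notinR (subR _ hPT0) ((-1 : ℤ), (-1 : ℤ)) (by decide) (by decide))
    | (exact notinR (subR _ hPT0) ((-1 : ℤ), (1 : ℤ)) (by decide) (by decide))
    | (exact notinR (subR _ hPT0) ((1 : ℤ), (-1 : ℤ)) (by decide) (by decide))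
    | (exact notinR (subR _ hPT0) ((0 : ℤ), (-2 : ℤ)) (by decide) (by decide))
    | (exact notinR (subR _ hPT0) ((0 : ℤ), (-1 : ℤ)) (by decide) (by decide))
    | skip
  -- survivor shape 0: [(0, 0), (1, 0), (1, 1), (2, 0)]
  ·
    obtain ⟨P1, hPT1, hPc1⟩ := cover ((0 : ℤ), (1 : ℤ)) (by simp [Rect]; omega)
    obtain ⟨s1, hs1, v1, rfl⟩ := hsh P1 hPT1
    obtain ⟨t1, ht1, hPe1⟩ := classify hs1 hPc1
    rw [hPe1] at hPT1
    clear hPc1 hPe1 hs1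
    fin_cases ht1 <;>
      first
      | (exact clash hdisj hPT1 hPT0 (by decide) (by decide))
      | (exact notinR (subR _ hPT1) ((-1 : ℤ), (1 : ℤ)) (by decide) (by decide))
      | (exact notinR (subR _ hPT1) ((-2 : ℤ), (1 : ℤ)) (by decide) (by decide))
      | (exact notinR (subR _ hPT1) ((-1 : ℤ), (0 : ℤ)) (by decide) (by decide))
      | (exact notinR (subR _ hPT1) ((-1 : ℤ), (2 : ℤ)) (by decide) (by decide))
      | (exact notinR (subR _ hPT1) ((0 : ℤ), (-1 : ℤ)) (by decide) (by decide))
      | skip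
    -- survivor shape 14: [(0, 1), (0, 2), (0, 3), (1, 2)]
    obtain ⟨P2, hPT2, hPc2⟩ := cover ((0 : ℤ), (5 : ℤ)) (by simp [Rect]; omega)
    obtain ⟨s2, hs2, v2, rfl⟩ := hsh P2 hPT2
    obtain ⟨t2, ht2, hPe2⟩ := classify hs2 hPc2
    rw [hPe2] at hPT2
    clear hPc2 hPe2 hs2
    fin_cases ht2 <;>
      first
      | (exact notinR (subR _ hPT2) ((1 : ℤ), (6 : ℤ)) (by decide) (by decide))
      | (exact notinR (subR _ hPT2) ((-1 : ℤ), (5 : ℤ)) (by decide) (by decide))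
      | (exact notinR (subR _ hPT2) ((-2 : ℤ), (5 : ℤ)) (by decide) (by decide))
      | (exact notinR (subR _ hPT2) ((-1 : ℤ), (4 : ℤ)) (by decide) (by decide))
      | (exact notinR (subR _ hPT2) ((-1 : ℤ), (6 : ℤ)) (by decide) (by decide))
      | (exact clash hdisj hPT2 hPT1 (by decide) (by decide))
      | (exact notinR (subR _ hPT2) ((0 : ℤ), (6 : ℤ)) (by decide) (by decide))
      | skip
    -- survivor shape 10: [(0, 5), (1, 4), (1, 5), (2, 5)]
    obtain ⟨P3, hPT3, hPc3⟩ := cover ((0 : ℤ), (4 : ℤ)) (by simp [Rect]; omega)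
    obtain ⟨s3, hs3, v3, rfl⟩ := hsh P3 hPT3
    obtain ⟨t3, ht3, hPe3⟩ := classify hs3 hPc3
    rw [hPe3] at hPT3
    clear hPc3 hPe3 hs3
    fin_cases ht3 <;>
      first
      | (exact clash hdisj hPT3 hPT2 (by decide) (by decide))
      | (exact notinR (subR _ hPT3) ((-1 : ℤ), (4 : ℤ)) (by decide) (by decide))
      | (exact notinR (subR _ hPT3) ((-2 : ℤ), (4 : ℤ)) (by decide) (by decide))
      | (exact notinR (subR _ hPT3) ((-1 : ℤ), (3 : ℤ)) (by decide) (by decide))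
      | (exact notinR (subR _ hPT3) ((-1 : ℤ), (5 : ℤ)) (by decide) (by decide))
      | (exact clash hdisj hPT3 hPT1 (by decide) (by decide))
      | (exact notinR (subR _ hPT3) ((0 : ℤ), (6 : ℤ)) (by decide) (by decide))
      | skip
  -- survivor shape 14: [(0, 0), (0, 1), (0, 2), (1, 1)]
  ·
    have hn1 : ((1 : ℤ)) < (n : ℤ) := inR_bound (subR _ hPT0) ((1 : ℤ), (1 : ℤ)) (by decide)
    obtain ⟨P4, hPT4, hPc4⟩ := cover ((0 : ℤ), (5 : ℤ)) (by simp [Rect]; omega)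
    obtain ⟨s4, hs4, v4, rfl⟩ := hsh P4 hPT4
    obtain ⟨t4, ht4, hPe4⟩ := classify hs4 hPc4
    rw [hPe4] at hPT4
    clear hPc4 hPe4 hs4
    fin_cases ht4 <;>
      first
      | (exact notinR (subR _ hPT4) ((1 : ℤ), (6 : ℤ)) (by decide) (by decide))
      | (exact notinR (subR _ hPT4) ((-1 : ℤ), (5 : ℤ)) (by decide) (by decide))
      | (exact notinR (subR _ hPT4) ((-2 : ℤ), (5 : ℤ)) (by decide) (by decide))
      | (exact notinR (subR _ hPT4) ((-1 : ℤ), (4 : ℤ)) (by decide) (by decide))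
      | (exact notinR (subR _ hPT4) ((-1 : ℤ), (6 : ℤ)) (by decide) (by decide))
      | (exact notinR (subR _ hPT4) ((0 : ℤ), (6 : ℤ)) (by decide) (by decide))
      | skip
    -- survivor shape 10: [(0, 5), (1, 4), (1, 5), (2, 5)]
    ·
      obtain ⟨P5, hPT5, hPc5⟩ := cover ((0 : ℤ), (4 : ℤ)) (by simp [Rect]; omega)
      obtain ⟨s5, hs5, v5, rfl⟩ := hsh P5 hPT5
      obtain ⟨t5, ht5, hPe5⟩ := classify hs5 hPc5
      rw [hPe5] at hPT5
      clear hPc5 hPe5 hs5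
      fin_cases ht5 <;>
        first
        | (exact clash hdisj hPT5 hPT4 (by decide) (by decide))
        | (exact notinR (subR _ hPT5) ((-1 : ℤ), (4 : ℤ)) (by decide) (by decide))
        | (exact notinR (subR _ hPT5) ((-2 : ℤ), (4 : ℤ)) (by decide) (by decide))
        | (exact notinR (subR _ hPT5) ((-1 : ℤ), (3 : ℤ)) (by decide) (by decide))
        | (exact notinR (subR _ hPT5) ((-1 : ℤ), (5 : ℤ)) (by decide) (by decide))
        | (exact clash hdisj hPT5 hPT0 (by decide) (by decide))
        | (exact notinR (subR _ hPT5) ((0 : ℤ), (6 : ℤ)) (by decide) (by decide))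
        | skip
    -- survivor shape 12: [(0, 3), (0, 4), (0, 5), (1, 4)]
    ·
      obtain ⟨P6, hPT6, hPc6⟩ := cover ((1 : ℤ), (0 : ℤ)) (by simp [Rect]; omega)
      obtain ⟨s6, hs6, v6, rfl⟩ := hsh P6 hPT6
      obtain ⟨t6, ht6, hPe6⟩ := classify hs6 hPc6
      rw [hPe6] at hPT6
      clear hPc6 hPe6 hs6
      fin_cases ht6 <;>
        first
        | (exact clash hdisj hPT6 hPT0 (by decide) (by decide))
        | (exact notinR (subR _ hPT6) ((-1 : ℤ), (0 : ℤ)) (by decide) (by decide))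
        | (exact notinR (subR _ hPT6) ((0 : ℤ), (-1 : ℤ)) (by decide) (by decide))
        | (exact notinR (subR _ hPT6) ((1 : ℤ), (-1 : ℤ)) (by decide) (by decide))
        | (exact notinR (subR _ hPT6) ((2 : ℤ), (-1 : ℤ)) (by decide) (by decide))
        | (exact notinR (subR _ hPT6) ((1 : ℤ), (-2 : ℤ)) (by decide) (by decide))
        | skip
      -- survivor shape 0: [(1, 0), (2, 0), (2, 1), (3, 0)]
      obtain ⟨P7, hPT7, hPc7⟩ := cover ((1 : ℤ), (5 : ℤ)) (by simp [Rect]; omega)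
      obtain ⟨s7, hs7, v7, rfl⟩ := hsh P7 hPT7
      obtain ⟨t7, ht7, hPe7⟩ := classify hs7 hPc7
      rw [hPe7] at hPT7
      clear hPc7 hPe7 hs7
      fin_cases ht7 <;>
        first
        | (exact notinR (subR _ hPT7) ((2 : ℤ), (6 : ℤ)) (by decide) (by decide))
        | (exact notinR (subR _ hPT7) ((1 : ℤ), (6 : ℤ)) (by decide) (by decide))
        | (exact notinR (subR _ hPT7) ((-1 : ℤ), (5 : ℤ)) (by decide) (by decide))
        | (exact clash hdisj hPT7 hPT4 (by decide) (by decide))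
        | (exact notinR (subR _ hPT7) ((0 : ℤ), (6 : ℤ)) (by decide) (by decide))
        | skip
      -- survivor shape 10: [(1, 5), (2, 4), (2, 5), (3, 5)]
      obtain ⟨P8, hPT8, hPc8⟩ := cover ((1 : ℤ), (2 : ℤ)) (by simp [Rect]; omega)
      obtain ⟨s8, hs8, v8, rfl⟩ := hsh P8 hPT8
      obtain ⟨t8, ht8, hPe8⟩ := classify hs8 hPc8
      rw [hPe8] at hPT8
      clear hPc8 hPe8 hs8
      fin_cases ht8 <;>
        first
        | (exact clash hdisj hPT8 hPT0 (by decide) (by decide))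
        | (exact notinR (subR _ hPT8) ((-1 : ℤ), (2 : ℤ)) (by decide) (by decide))
        | (exact clash hdisj hPT8 hPT4 (by decide) (by decide))
        | (exact clash hdisj hPT8 hPT6 (by decide) (by decide))
        | skip
      -- survivor shape 0: [(1, 2), (2, 2), (2, 3), (3, 2)]
      obtain ⟨P9, hPT9, hPc9⟩ := cover ((1 : ℤ), (3 : ℤ)) (by simp [Rect]; omega)
      obtain ⟨s9, hs9, v9, rfl⟩ := hsh P9 hPT9
      obtain ⟨t9, ht9, hPe9⟩ := classify hs9 hPc9
      rw [hPe9] at hPT9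
      clear hPc9 hPe9 hs9
      fin_cases ht9 <;>
        first
        | (exact clash hdisj hPT9 hPT7 (by decide) (by decide))
        | (exact clash hdisj hPT9 hPT4 (by decide) (by decide))
        | (exact notinR (subR _ hPT9) ((-1 : ℤ), (3 : ℤ)) (by decide) (by decide))
        | (exact clash hdisj hPT9 hPT0 (by decide) (by decide))
        | (exact clash hdisj hPT9 hPT8 (by decide) (by decide))
        | skip
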